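/- arXiv:2603.04530 — 2 statements merged into one kernel-verified Lean document; each statement's English description precedes it below -/
import Mathlib

section
/- Let Y be a nonempty set, 𝔹 = {0,1}, and let μ, ν be finitely supported probability distributions on 𝔹 × Y, with p := ∑_y μ(1,y), q := ∑_y ν(1,y), and conditional distributions μ̄₁, μ̄₀, ν̄₁, ν̄₀ on Y (i.e. μ(1,y) = p·μ̄₁(y), μ(0,y) = (1−p)·μ̄₀(y), ν(1,y) = q·ν̄₁(y), ν(0,y) = (1−q)·ν̄₀(y) for all y, arbitrary when the mass is 0). Then Re_∞(μ,ν) = max{ log(p/q) + Re_∞(μ̄₁,ν̄₁), log((1−p)/(1−q)) + Re_∞(μ̄₀,ν̄₀) }, with all arithmetic in the extended reals and the total value lying in [0,∞]. -/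
open scoped ENNReal

/- A finitely supported probability distribution on `X`. -/
structure FinDist (X : Type*) where
  f : X → ℝ
  nonneg : ∀ x, 0 ≤ f x
  finite : (Function.support f).Finite
  sum_one : ∑ᶠ x, f x = 1

/- Truncation of an extended real to `[0,∞]`. -/
noncomputable def toENN (x : EReal) : ℝ≥0∞ :=
  if x = ⊤ then ⊤ else ENNReal.ofReal x.toReal

/- Rényi divergence of order `α` (`0 ≤ α < ∞`, `α ≠ 1`):
`(1/(α−1))·log(∑ₓ μ(x)^α / ν(x)^{α−1})`, computed in `[0,∞]`, where terms with
`μ(x) = 0` vanish, `a/0 = ∞` for `0 < a` (via `ENNReal` division and `rpow`),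
and `log ∞ = ∞`. -/
open Classical in
noncomputable def renyi {X : Type*} (α : ℝ) (μ ν : FinDist X) : ℝ≥0∞ :=
  toENN ((((α - 1)⁻¹ : ℝ) : EReal) *
    ENNReal.log (∑ᶠ x, if μ.f x = 0 then 0
      else ENNReal.ofReal (μ.f x) ^ α / ENNReal.ofReal (ν.f x) ^ (α - 1)))

/- Rényi divergence of order `∞`: `sup_x log (μ(x)/ν(x))`, with `a/0 = ∞` for
`a > 0`, `0/0 = 0` (both via `ENNReal` division) and `log ∞ = ∞`. -/
noncomputable def renyiInf {X : Type*} (μ ν : FinDist X) : ℝ≥0∞ :=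
  toENN (⨆ x, ENNReal.log (ENNReal.ofReal (μ.f x) / ENNReal.ofReal (ν.f x)))

lemma ereal_neg_add_cancel (r : ℝ) (x : EReal) :
    ((-r : ℝ) : EReal) + ((r : ℝ) + x) = x := by
  induction x using EReal.rec with
  | bot => simp
  | top => rw [EReal.coe_add_top, EReal.coe_add_top]
  | coe a => norm_cast; ring

lemma ereal_add_iSup {ι : Sort*} [Nonempty ι] (c : EReal) (g : ι → EReal) :
    (⨆ i, c + g i) = c + ⨆ i, g i := by
  induction c using EReal.rec with
  | bot => simp
  | top =>
    by_cases h : ∀ i, g i = ⊥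
    · have h1 : (⨆ i, g i) = ⊥ := iSup_eq_bot.mpr h
      have h2 : ∀ i, (⊤ : EReal) + g i = ⊥ := fun i => by rw [h i]; simp
      simp only [h2, h1, iSup_const]
      simp
    · push_neg at h
      obtain ⟨i, hi⟩ := h
      have h1 : (⊤ : EReal) + g i = ⊤ := EReal.top_add_of_ne_bot hi
      have h2 : (⨆ i, g i) ≠ ⊥ := fun hb => hi (le_bot_iff.mp (hb ▸ le_iSup g i))
      rw [EReal.top_add_of_ne_bot h2]
      exact top_unique (h1.symm.le.trans (le_iSup (fun j => (⊤ : EReal) + g j) i))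
  | coe r =>
    apply le_antisymm
    · exact iSup_le fun i => add_le_add_right (le_iSup g i) _
    · have h1 : (⨆ i, g i) ≤ ((-r : ℝ) : EReal) + ⨆ i, (r : ℝ) + g i :=
        iSup_le fun i =>
          (ereal_neg_add_cancel r (g i)) ▸
            add_le_add_right (le_iSup (fun i => ((r : ℝ) : EReal) + g i) i) _
      calc ((r : ℝ) : EReal) + ⨆ i, g i
          ≤ (r : ℝ) + (((-r : ℝ) : EReal) + ⨆ i, (r : ℝ) + g i) := add_le_add_right h1 _
        _ = ⨆ i, ((r : ℝ) : EReal) + g i := by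
            rw [show ((r : ℝ) : EReal) = ((-(-r) : ℝ) : EReal) by norm_num,
              ereal_neg_add_cancel (-r)]

lemma toENN_coe_of_nonneg {x : EReal} (hx : 0 ≤ x) : ((toENN x : ℝ≥0∞) : EReal) = x := by
  unfold toENN
  split_ifs with h
  · simp [h]
  · have hb : x ≠ ⊥ := fun hbot => by simp [hbot] at hx
    rw [EReal.coe_ennreal_ofReal]
    have h0 : (0 : ℝ) ≤ x.toReal := by
      induction x using EReal.rec with
      | bot => simp at hx
      | top => exact absurd rfl h
      | coe a => rw [EReal.toReal_coe]; exact_mod_cast hx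
    rw [max_eq_left h0]
    exact EReal.coe_toReal h hb

lemma ennreal_mul_div_mul {a b c d : ℝ≥0∞} (hc : c ≠ ⊤) (hd : d ≠ ⊤) :
    (a * b) / (c * d) = (a / c) * (b / d) := by
  rw [div_eq_mul_inv, div_eq_mul_inv, div_eq_mul_inv,
    ENNReal.mul_inv (Or.inr hd) (Or.inl hc), mul_mul_mul_comm]

lemma renyiSup_nonneg {X : Type*} (μ ν : FinDist X) :
    0 ≤ ⨆ x, ENNReal.log (ENNReal.ofReal (μ.f x) / ENNReal.ofReal (ν.f x)) := by
  classical
  obtain ⟨x, hx1, hx2⟩ : ∃ x, 0 < μ.f x ∧ ν.f x ≤ μ.f x := by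
    by_contra h
    push_neg at h
    set s := μ.finite.toFinset with hs_def
    have hs : ∑ x ∈ s, μ.f x = 1 := by
      rw [← finsum_eq_sum _ μ.finite]; exact μ.sum_one
    have hne : s.Nonempty := by
      by_contra hs'
      rw [Finset.not_nonempty_iff_eq_empty] at hs'
      rw [hs', Finset.sum_empty] at hs
      norm_num at hs
    have hlt : ∑ x ∈ s, μ.f x < ∑ x ∈ s, ν.f x := by
      refine Finset.sum_lt_sum_of_nonempty hne fun x hx => h x ?_
      have := μ.finite.mem_toFinset.mp hx
      exact lt_of_le_of_ne (μ.nonneg x) (Ne.symm this)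
    have hle : ∑ x ∈ s, ν.f x ≤ 1 := by
      rw [← ν.sum_one,
        finsum_eq_finset_sum_of_support_subset ν.f
          (s := s ∪ ν.finite.toFinset) (by
            intro x hx
            exact Finset.mem_coe.mpr (Finset.mem_union_right _ (ν.finite.mem_toFinset.mpr hx)))]
      exact Finset.sum_le_sum_of_subset_of_nonneg Finset.subset_union_left
        (fun x _ _ => ν.nonneg x)
    linarith
  refine le_trans ?_ (le_iSup _ x)
  rw [ENNReal.zero_le_log_iff]
  rw [ENNReal.le_div_iff_mul_le (Or.inr (by simpa using hx1)) (Or.inl ENNReal.ofReal_ne_top),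
    one_mul]
  exact ENNReal.ofReal_le_ofReal hx2

lemma finsum_true_bounds {Y : Type*} (μ : FinDist (Bool × Y)) :
    0 ≤ (∑ᶠ y, μ.f (true, y)) ∧ (∑ᶠ y, μ.f (true, y)) ≤ 1 := by
  classical
  set s := μ.finite.toFinset with hs_def
  set t : Finset Y := s.image Prod.snd with ht_def
  have hsubT : Function.support (fun y => μ.f (true, y)) ⊆ (t : Set Y) := by
    intro y hy
    exact Finset.mem_coe.mpr (Finset.mem_image.mpr
      ⟨(true, y), μ.finite.mem_toFinset.mpr hy, rfl⟩)
  have hsubF : Function.support (fun y => μ.f (false, y)) ⊆ (t : Set Y) := by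
    intro y hy
    exact Finset.mem_coe.mpr (Finset.mem_image.mpr
      ⟨(false, y), μ.finite.mem_toFinset.mpr hy, rfl⟩)
  have hT : ∑ᶠ y, μ.f (true, y) = ∑ y ∈ t, μ.f (true, y) :=
    finsum_eq_finset_sum_of_support_subset _ hsubT
  have hF : ∑ᶠ y, μ.f (false, y) = ∑ y ∈ t, μ.f (false, y) :=
    finsum_eq_finset_sum_of_support_subset _ hsubF
  have htot : ∑ᶠ x : Bool × Y, μ.f x = ∑ x ∈ (Finset.univ ×ˢ t), μ.f x := by
    refine finsum_eq_finset_sum_of_support_subset _ ?_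
    intro x hx
    refine Finset.mem_coe.mpr (Finset.mem_product.mpr
      ⟨Finset.mem_univ _, Finset.mem_image.mpr ⟨x, μ.finite.mem_toFinset.mpr hx, rfl⟩⟩)
  have hsum : ∑ x ∈ Finset.univ ×ˢ t, μ.f x
      = ∑ y ∈ t, μ.f (true, y) + ∑ y ∈ t, μ.f (false, y) := by
    rw [Finset.sum_product, Fintype.sum_bool]
  have h1 : ∑ y ∈ t, μ.f (true, y) + ∑ y ∈ t, μ.f (false, y) = 1 := by
    rw [← hsum, ← htot, μ.sum_one]
  have hFn : 0 ≤ ∑ y ∈ t, μ.f (false, y) := Finset.sum_nonneg fun y _ => μ.nonneg _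
  constructor
  · rw [hT]; exact Finset.sum_nonneg fun y _ => μ.nonneg _
  · rw [hT]; linarith

/- Chain rule for the Rényi divergence of order `∞` on a product `𝔹 × Y`
(Lemma 5.2, equation (5.2) of the paper), with the arithmetic in the extended
reals and the total value truncated to `[0,∞]`. -/

theorem renyiInf_chain_rule_prod {Y : Type*} [Nonempty Y]
    (μ ν : FinDist (Bool × Y)) (μ1 μ0 ν1 ν0 : FinDist Y) (p q : ℝ)
    (hp : p = ∑ᶠ y, μ.f (true, y))
    (hq : q = ∑ᶠ y, ν.f (true, y))
    (hμ1 : ∀ y, μ.f (true, y) = p * μ1.f y)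
    (hμ0 : ∀ y, μ.f (false, y) = (1 - p) * μ0.f y)
    (hν1 : ∀ y, ν.f (true, y) = q * ν1.f y)
    (hν0 : ∀ y, ν.f (false, y) = (1 - q) * ν0.f y) :
    renyiInf μ ν = toENN
      (max
        (ENNReal.log (ENNReal.ofReal p / ENNReal.ofReal q)
          + (renyiInf μ1 ν1 : EReal))
        (ENNReal.log (ENNReal.ofReal (1 - p) / ENNReal.ofReal (1 - q))
          + (renyiInf μ0 ν0 : EReal))) := by
  have hpB := finsum_true_bounds μ
  have hqB := finsum_true_bounds ν
  have hp0 : 0 ≤ p := hp ▸ hpB.1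
  have hp1 : 0 ≤ 1 - p := by have h := hpB.2; rw [← hp] at h; linarith
  have hq0 : 0 ≤ q := hq ▸ hqB.1
  have hq1 : 0 ≤ 1 - q := by have h := hqB.2; rw [← hq] at h; linarith
  have S1nn := renyiSup_nonneg μ1 ν1
  have S0nn := renyiSup_nonneg μ0 ν0
  have key1 : ∀ y, ENNReal.log (ENNReal.ofReal (μ.f (true, y)) / ENNReal.ofReal (ν.f (true, y)))
      = ENNReal.log (ENNReal.ofReal p / ENNReal.ofReal q)
        + ENNReal.log (ENNReal.ofReal (μ1.f y) / ENNReal.ofReal (ν1.f y)) := by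
    intro y
    rw [hμ1 y, hν1 y, ENNReal.ofReal_mul hp0, ENNReal.ofReal_mul hq0,
      ennreal_mul_div_mul ENNReal.ofReal_ne_top ENNReal.ofReal_ne_top, ENNReal.log_mul_add]
  have key0 : ∀ y, ENNReal.log (ENNReal.ofReal (μ.f (false, y)) / ENNReal.ofReal (ν.f (false, y)))
      = ENNReal.log (ENNReal.ofReal (1 - p) / ENNReal.ofReal (1 - q))
        + ENNReal.log (ENNReal.ofReal (μ0.f y) / ENNReal.ofReal (ν0.f y)) := by
    intro y
    rw [hμ0 y, hν0 y, ENNReal.ofReal_mul hp1, ENNReal.ofReal_mul hq1,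
      ennreal_mul_div_mul ENNReal.ofReal_ne_top ENNReal.ofReal_ne_top, ENNReal.log_mul_add]
  have e1 : (⨆ y, ENNReal.log (ENNReal.ofReal (μ.f (true, y)) / ENNReal.ofReal (ν.f (true, y))))
      = ENNReal.log (ENNReal.ofReal p / ENNReal.ofReal q) + (renyiInf μ1 ν1 : EReal) := by
    simp_rw [key1]
    rw [ereal_add_iSup]
    congr 1
    exact (toENN_coe_of_nonneg S1nn).symm
  have e0 : (⨆ y, ENNReal.log (ENNReal.ofReal (μ.f (false, y)) / ENNReal.ofReal (ν.f (false, y))))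
      = ENNReal.log (ENNReal.ofReal (1 - p) / ENNReal.ofReal (1 - q)) + (renyiInf μ0 ν0 : EReal) := by
    simp_rw [key0]
    rw [ereal_add_iSup]
    congr 1
    exact (toENN_coe_of_nonneg S0nn).symm
  have main : (⨆ x : Bool × Y, ENNReal.log (ENNReal.ofReal (μ.f x) / ENNReal.ofReal (ν.f x)))
      = max
        (ENNReal.log (ENNReal.ofReal p / ENNReal.ofReal q) + (renyiInf μ1 ν1 : EReal))
        (ENNReal.log (ENNReal.ofReal (1 - p) / ENNReal.ofReal (1 - q)) + (renyiInf μ0 ν0 : EReal)) := by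
    rw [iSup_prod, iSup_bool_eq, e1, e0]
  exact congrArg toENN main
end

section
/- Let X and Y be nonempty sets and let μ, ν be finitely supported probability distributions on the disjoint union X + Y, with p := ∑_{x∈X} μ(x), q := ∑_{x∈X} ν(x), and conditional distributions μ_X, μ_Y, ν_X, ν_Y (i.e. μ(x) = p·μ_X(x), μ(y) = (1−p)·μ_Y(y), ν(x) = q·ν_X(x), ν(y) = (1−q)·ν_Y(y), arbitrary when the mass is 0). Then Re_∞(μ,ν) = max{ log(p/q) + Re_∞(μ_X,ν_X), log((1−p)/(1−q)) + Re_∞(μ_Y,ν_Y) }, with all arithmetic in the extended reals and the total value lying in [0,∞]. -/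
open scoped ENNReal

lemma coe_toENN_of_nonneg {e : EReal} (he : 0 ≤ e) : ((toENN e : ℝ≥0∞) : EReal) = e := by
  induction e using EReal.rec with
  | bot => exact absurd he (by simp)
  | coe x =>
      have hx : (0:ℝ) ≤ x := by exact_mod_cast he
      simp [toENN, EReal.coe_ennreal_ofReal, max_eq_left hx]
  | top => simp [toENN]

noncomputable def logIso : ℝ≥0∞ ≃o EReal :=
  StrictMono.orderIsoOfSurjective _ ENNReal.log_strictMono ENNReal.log_surjective

lemma log_iSup {ι : Sort*} (f : ι → ℝ≥0∞) :
    ENNReal.log (⨆ i, f i) = ⨆ i, ENNReal.log (f i) :=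
  logIso.map_iSup f

lemma div_mul_div_enn (a b c d : ℝ≥0∞) (hc : c ≠ ⊤) (hd : d ≠ ⊤) :
    (a * b) / (c * d) = (a / c) * (b / d) := by
  rw [div_eq_mul_inv, div_eq_mul_inv, div_eq_mul_inv, ENNReal.mul_inv (Or.inr hd) (Or.inl hc)]
  ring

lemma finsum_sum_split {X Y : Type*} (f : X ⊕ Y → ℝ) (hf : (Function.support f).Finite) :
    ∑ᶠ z, f z = ∑ᶠ x, f (Sum.inl x) + ∑ᶠ y, f (Sum.inr y) := by
  rw [← finsum_mem_univ, ← Set.range_inl_union_range_inr,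
    finsum_mem_union' Set.isCompl_range_inl_range_inr.disjoint
      (hf.inter_of_right _) (hf.inter_of_right _),
    finsum_mem_range Sum.inl_injective, finsum_mem_range Sum.inr_injective]

lemma one_le_ratio {X : Type*} (μ ν : FinDist X) :
    1 ≤ ⨆ x, ENNReal.ofReal (μ.f x) / ENNReal.ofReal (ν.f x) := by
  classical
  by_contra h
  push_neg at h
  have hlt : ∀ x, μ.f x ≠ 0 → μ.f x < ν.f x := by
    intro x hx
    have h1 : ENNReal.ofReal (μ.f x) / ENNReal.ofReal (ν.f x) < 1 :=
      lt_of_le_of_lt (le_iSup (fun x => ENNReal.ofReal (μ.f x) / ENNReal.ofReal (ν.f x)) x) h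
    have hμ0 : 0 < μ.f x := lt_of_le_of_ne (μ.nonneg x) (Ne.symm hx)
    have hμ0' : ENNReal.ofReal (μ.f x) ≠ 0 := by
      simp [ENNReal.ofReal_eq_zero, not_le, hμ0]
    have hν0 : ENNReal.ofReal (ν.f x) ≠ 0 := by
      intro h0
      rw [h0, ENNReal.div_zero hμ0'] at h1
      exact (by simp : ¬ ((⊤:ℝ≥0∞) < 1)) h1
    rw [ENNReal.div_lt_iff (Or.inl hν0) (Or.inl ENNReal.ofReal_ne_top), one_mul] at h1
    have hν0' : 0 < ν.f x := by
      by_contra hc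
      exact hν0 (ENNReal.ofReal_eq_zero.mpr (not_lt.mp hc))
    exact (ENNReal.ofReal_lt_ofReal_iff hν0').mp h1
  have hsupp : (Function.support μ.f).Nonempty := by
    rw [Function.support_nonempty_iff]
    intro h0
    have h1 := μ.sum_one
    rw [h0] at h1
    simpa using h1
  set s := μ.finite.toFinset with hs
  have hs_ne : s.Nonempty := by
    obtain ⟨x, hx⟩ := hsupp
    exact ⟨x, μ.finite.mem_toFinset.mpr hx⟩
  have hμsum : ∑ x ∈ s, μ.f x = 1 := by
    rw [← finsum_eq_sum μ.f μ.finite]; exact μ.sum_one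
  set t := s ∪ ν.finite.toFinset with ht
  have hνsum : ∑ x ∈ t, ν.f x = 1 := by
    rw [← ν.sum_one]
    exact (finsum_eq_finset_sum_of_support_subset ν.f (by
      intro x hx
      simp only [ht, Finset.coe_union, Set.Finite.coe_toFinset, Set.mem_union]
      exact Or.inr hx)).symm
  have h1 : ∑ x ∈ s, μ.f x < ∑ x ∈ s, ν.f x :=
    Finset.sum_lt_sum_of_nonempty hs_ne fun x hx =>
      hlt x (by simpa [Function.mem_support] using μ.finite.mem_toFinset.mp hx)
  have h2 : ∑ x ∈ s, ν.f x ≤ ∑ x ∈ t, ν.f x :=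
    Finset.sum_le_sum_of_subset_of_nonneg Finset.subset_union_left fun x _ _ => ν.nonneg x
  rw [hμsum] at h1
  rw [hνsum] at h2
  linarith

/- Chain rule for the Rényi divergence of order `∞` on a disjoint union `X + Y`
(Lemma 5.3, equation (5.4) of the paper), with the arithmetic in the extended
reals and the total value truncated to `[0,∞]`. -/
theorem renyiInf_chain_rule_sum {X Y : Type*} [Nonempty X] [Nonempty Y]
    (μ ν : FinDist (X ⊕ Y)) (μX νX : FinDist X) (μY νY : FinDist Y) (p q : ℝ)
    (hp : p = ∑ᶠ x, μ.f (Sum.inl x))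
    (hq : q = ∑ᶠ x, ν.f (Sum.inl x))
    (hμX : ∀ x, μ.f (Sum.inl x) = p * μX.f x)
    (hμY : ∀ y, μ.f (Sum.inr y) = (1 - p) * μY.f y)
    (hνX : ∀ x, ν.f (Sum.inl x) = q * νX.f x)
    (hνY : ∀ y, ν.f (Sum.inr y) = (1 - q) * νY.f y) :
    renyiInf μ ν = toENN
      (max
        (ENNReal.log (ENNReal.ofReal p / ENNReal.ofReal q)
          + (renyiInf μX νX : EReal))
        (ENNReal.log (ENNReal.ofReal (1 - p) / ENNReal.ofReal (1 - q))
          + (renyiInf μY νY : EReal))) := by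
  have hp0 : 0 ≤ p := hp ▸ finsum_nonneg fun x => μ.nonneg _
  have hq0 : 0 ≤ q := hq ▸ finsum_nonneg fun x => ν.nonneg _
  have hμsplit := finsum_sum_split μ.f μ.finite
  have hνsplit := finsum_sum_split ν.f ν.finite
  have hp1 : 0 ≤ 1 - p := by
    have h1 := μ.sum_one
    have h2 : 0 ≤ ∑ᶠ y, μ.f (Sum.inr y) := finsum_nonneg fun y => μ.nonneg _
    rw [hμsplit, ← hp] at h1
    linarith
  have hq1 : 0 ≤ 1 - q := by
    have h1 := ν.sum_one
    have h2 : 0 ≤ ∑ᶠ y, ν.f (Sum.inr y) := finsum_nonneg fun y => ν.nonneg _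
    rw [hνsplit, ← hq] at h1
    linarith
  set P := ENNReal.ofReal p / ENNReal.ofReal q with hP
  set Q := ENNReal.ofReal (1 - p) / ENNReal.ofReal (1 - q) with hQ
  set RX := ⨆ x, ENNReal.ofReal (μX.f x) / ENNReal.ofReal (νX.f x) with hRX
  set RY := ⨆ y, ENNReal.ofReal (μY.f y) / ENNReal.ofReal (νY.f y) with hRY
  have hXpt : ∀ x, ENNReal.ofReal (μ.f (Sum.inl x)) / ENNReal.ofReal (ν.f (Sum.inl x))
      = P * (ENNReal.ofReal (μX.f x) / ENNReal.ofReal (νX.f x)) := by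
    intro x
    rw [hμX, hνX, ENNReal.ofReal_mul hp0, ENNReal.ofReal_mul hq0,
      div_mul_div_enn _ _ _ _ ENNReal.ofReal_ne_top ENNReal.ofReal_ne_top]
  have hYpt : ∀ y, ENNReal.ofReal (μ.f (Sum.inr y)) / ENNReal.ofReal (ν.f (Sum.inr y))
      = Q * (ENNReal.ofReal (μY.f y) / ENNReal.ofReal (νY.f y)) := by
    intro y
    rw [hμY, hνY, ENNReal.ofReal_mul hp1, ENNReal.ofReal_mul hq1,
      div_mul_div_enn _ _ _ _ ENNReal.ofReal_ne_top ENNReal.ofReal_ne_top]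
  have hsup : (⨆ z, ENNReal.ofReal (μ.f z) / ENNReal.ofReal (ν.f z))
      = max (P * RX) (Q * RY) := by
    rw [iSup_sum]
    simp only [hXpt, hYpt, ← ENNReal.mul_iSup]
    rfl
  have hRX1 : 1 ≤ RX := one_le_ratio μX νX
  have hRY1 : 1 ≤ RY := one_le_ratio μY νY
  have hcoeX : ((renyiInf μX νX : ℝ≥0∞) : EReal) = ENNReal.log RX := by
    rw [renyiInf, ← log_iSup]
    exact coe_toENN_of_nonneg (ENNReal.zero_le_log_iff.mpr hRX1)
  have hcoeY : ((renyiInf μY νY : ℝ≥0∞) : EReal) = ENNReal.log RY := by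
    rw [renyiInf, ← log_iSup]
    exact coe_toENN_of_nonneg (ENNReal.zero_le_log_iff.mpr hRY1)
  rw [renyiInf, ← log_iSup, hsup, hcoeX, hcoeY, ← ENNReal.log_mul_add,
    ← ENNReal.log_mul_add, ENNReal.log_strictMono.monotone.map_max]
end
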